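/- Fix r > 0, σ ∈ (0, 3/2), α > 0 and a > 0. Let Ξ_r be the set of nonnegative functions χ ∈ L^{1+1/σ}(ℝ × [0,∞)) vanishing on {(w,β) : √(1+w²+β/r²) ≥ 2}. Define H(χ) = ∫∫ ((σ/(σ+1)) χ^{1+1/σ} − α χ) dw dβ and the constraint F(χ) = ∫∫ √(1+w²+β/r²) χ dw dβ − (r²/π) a. Then the infimum of H over {χ ∈ Ξ_r : F(χ) = 0} is attained, and the minimizer subject to the constraint is unique. -/

import Mathlib

open MeasureTheory

/-- Lebesgue measure on `ℝ × [0,∞)` (as a measure on `ℝ × ℝ`). -/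
noncomputable def muHalf : Measure (ℝ × ℝ) :=
  volume.restrict {p : ℝ × ℝ | 0 ≤ p.2}

/-- The set `Ξ_r`: nonnegative functions in `L^{1+1/σ}(ℝ × [0,∞))` vanishing
where `√(1+w²+β/r²) ≥ 2`. -/
def XiSet (r σ : ℝ) : Set (ℝ × ℝ → ℝ) :=
  {χ | MemLp χ (ENNReal.ofReal (1 + 1 / σ)) muHalf ∧ (∀ p, 0 ≤ χ p) ∧
    ∀ p : ℝ × ℝ, 2 ≤ Real.sqrt (1 + p.1 ^ 2 + p.2 / r ^ 2) → χ p = 0}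

/-- `H(χ) = ∫∫ ((σ/(σ+1)) χ^{1+1/σ} − α χ)`. -/
noncomputable def Hfun (σ α : ℝ) (χ : ℝ × ℝ → ℝ) : ℝ :=
  ∫ p, (σ / (σ + 1)) * χ p ^ (1 + 1 / σ) - α * χ p ∂muHalf

/-- `F(χ) = ∫∫ √(1+w²+β/r²) χ − (r²/π) a`. -/
noncomputable def Ffun (r a : ℝ) (χ : ℝ × ℝ → ℝ) : ℝ :=
  (∫ p, Real.sqrt (1 + p.1 ^ 2 + p.2 / r ^ 2) * χ p ∂muHalf) - r ^ 2 / Real.pi * a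

namespace Stmt16


lemma phi_min {σ : ℝ} (hσ : 0 < σ) (b : ℝ) {t : ℝ} (ht : 0 ≤ t) :
    σ / (σ + 1) * (max b 0 ^ σ) ^ (1 + 1/σ) - b * max b 0 ^ σ ≤
      σ / (σ + 1) * t ^ (1 + 1/σ) - b * t := by
  have hσ1 : (0:ℝ) < σ + 1 := by linarith
  rcases le_or_gt b 0 with hb | hb
  · rw [max_eq_right hb, Real.zero_rpow hσ.ne', Real.zero_rpow (by positivity : (1:ℝ)+1/σ ≠ 0)]
    have h1 : 0 ≤ t ^ (1 + 1/σ) := Real.rpow_nonneg ht _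
    have h2 : 0 ≤ σ / (σ+1) := by positivity
    nlinarith [mul_nonneg h2 h1, mul_nonneg (neg_nonneg.mpr hb) ht]
  · rw [max_eq_left hb.le]
    have hconj : (1 + 1/σ).HolderConjugate (σ + 1) := by
      refine Real.holderConjugate_iff.mpr ⟨?_, ?_⟩
      · have : 0 < 1/σ := by positivity
        linarith
      · rw [inv_eq_one_div, inv_eq_one_div]; field_simp
    have e1 : (b ^ σ) ^ (1 + 1/σ) = b ^ (σ + 1) := by
      rw [← Real.rpow_mul hb.le]; congr 1; field_simp
    have e2 : b * b ^ σ = b ^ (σ + 1) := by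
      rw [Real.rpow_add hb, Real.rpow_one]; ring
    have hy := Real.young_inequality_of_nonneg ht hb.le hconj
    have hcp : t ^ (1+1/σ) / (1+1/σ) = σ/(σ+1) * t ^ (1+1/σ) := by
      rw [div_eq_mul_inv, mul_comm]; congr 1
      rw [inv_eq_one_div]; field_simp
    have hid : σ/(σ+1) * b^(σ+1) - b^(σ+1) = -(b^(σ+1)/(σ+1)) := by
      field_simp; ring
    rw [e1, e2]
    rw [hcp] at hy
    linarith [hy]

lemma phi_eq {σ : ℝ} (hσ : 0 < σ) (b : ℝ) {t : ℝ} (ht : 0 ≤ t)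
    (heq : σ / (σ + 1) * t ^ (1 + 1/σ) - b * t =
      σ / (σ + 1) * (max b 0 ^ σ) ^ (1 + 1/σ) - b * max b 0 ^ σ) :
    t = max b 0 ^ σ := by
  by_contra hne
  set c : ℝ := σ / (σ + 1) with hc
  have hcpos : 0 < c := by rw [hc]; positivity
  have hp : (1:ℝ) < 1 + 1/σ := by
    have : 0 < 1/σ := by positivity
    linarith
  set ts : ℝ := max b 0 ^ σ with hts
  have hts0 : 0 ≤ ts := Real.rpow_nonneg (le_max_right _ _) _
  set f : ℝ → ℝ := fun u => c * u ^ (1 + 1/σ) - b * u with hf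
  have hmin : ∀ u : ℝ, 0 ≤ u → f ts ≤ f u := fun u hu => phi_min hσ b hu
  have hmid0 : (0:ℝ) ≤ (1/2 : ℝ) • t + (1/2 : ℝ) • ts := by
    simp only [smul_eq_mul]; linarith
  have hstrict := (strictConvexOn_rpow hp).2 (Set.mem_Ici.mpr ht) (Set.mem_Ici.mpr hts0) hne
      (by norm_num : (0:ℝ) < 1/2) (by norm_num : (0:ℝ) < 1/2) (by norm_num)
  have hkey : f ((1/2 : ℝ) • t + (1/2 : ℝ) • ts) < (1/2) * f t + (1/2) * f ts := by
    simp only [hf, smul_eq_mul]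
    have := mul_lt_mul_of_pos_left hstrict hcpos
    simp only [smul_eq_mul] at this
    nlinarith [this]
  have h1 : f t = f ts := heq
  have h2 := hmin _ hmid0
  rw [h1] at hkey
  linarith



open ENNReal

noncomputable def g (r : ℝ) (p : ℝ × ℝ) : ℝ := Real.sqrt (1 + p.1 ^ 2 + p.2 / r ^ 2)

def S (r : ℝ) : Set (ℝ × ℝ) := {p | g r p < 2}

def B (r : ℝ) : Set (ℝ × ℝ) := Set.Icc (-2:ℝ) 2 ×ˢ Set.Icc (0:ℝ) (3 * r ^ 2)

lemma g_nonneg (r : ℝ) (p : ℝ × ℝ) : 0 ≤ g r p := Real.sqrt_nonneg _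

lemma g_cont (r : ℝ) : Continuous (g r) :=
  Real.continuous_sqrt.comp (by fun_prop)

lemma hS_meas (r : ℝ) : MeasurableSet (S r) :=
  (isOpen_Iio.preimage (g_cont r)).measurableSet

lemma hB_meas (r : ℝ) : MeasurableSet (B r) :=
  (measurableSet_Icc.prod measurableSet_Icc)

lemma hHp_meas : MeasurableSet {p : ℝ × ℝ | 0 ≤ p.2} :=
  measurableSet_le measurable_const measurable_snd

lemma ae_snd_nonneg : ∀ᵐ p ∂muHalf, 0 ≤ p.2 := ae_restrict_mem hHp_meas

lemma g_ge_one {r : ℝ} (hr : 0 < r) {p : ℝ × ℝ} (hp : 0 ≤ p.2) : 1 ≤ g r p := by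
  rw [g]
  have h0 : (0:ℝ) ≤ 1 + p.1 ^ 2 + p.2 / r ^ 2 := by
    have : 0 ≤ p.2 / r ^ 2 := div_nonneg hp (by positivity)
    nlinarith [sq_nonneg p.1]
  refine (Real.le_sqrt zero_le_one h0).mpr ?_
  have : 0 ≤ p.2 / r ^ 2 := div_nonneg hp (by positivity)
  nlinarith [sq_nonneg p.1]

lemma mem_B_of {r : ℝ} (hr : 0 < r) {p : ℝ × ℝ} (hp : 0 ≤ p.2) (hgp : g r p < 2) :
    p ∈ B r := by
  have h4 : 1 + p.1 ^ 2 + p.2 / r ^ 2 < 4 := by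
    have := (Real.sqrt_lt' (by norm_num : (0:ℝ) < 2)).mp hgp
    linarith [this]
  have hdiv : 0 ≤ p.2 / r ^ 2 := div_nonneg hp (by positivity)
  have hr2 : (0:ℝ) < r ^ 2 := by positivity
  have hsq : p.1 ^ 2 < 3 := by linarith
  constructor
  · constructor
    · nlinarith
    · nlinarith
  · constructor
    · exact hp
    · have : p.2 / r ^ 2 < 3 := by nlinarith [sq_nonneg p.1]
      calc p.2 = p.2 / r ^ 2 * r ^ 2 := by field_simp
        _ ≤ 3 * r ^ 2 := by nlinarith

lemma muHalf_B_lt_top (r : ℝ) : muHalf (B r) < ⊤ := by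
  rw [muHalf, Measure.restrict_apply (hB_meas r)]
  exact lt_of_le_of_lt (measure_mono Set.inter_subset_left)
    ((isCompact_Icc.prod isCompact_Icc).measure_lt_top)

/-- Membership in any `L^q` from a pointwise bound supported in the box. -/
lemma memLp_of_bound {r : ℝ} (q : ℝ≥0∞) (f : ℝ × ℝ → ℝ)
    (hf : AEStronglyMeasurable f muHalf) (C : ℝ)
    (h : ∀ p : ℝ × ℝ, 0 ≤ p.2 → ‖f p‖ ≤ (B r).indicator (fun _ => C) p) :
    MemLp f q muHalf := by
  refine MemLp.of_le (memLp_indicator_const q (hB_meas r) C (Or.inr (muHalf_B_lt_top r).ne))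
    hf ?_
  filter_upwards [ae_snd_nonneg] with p hp
  exact (h p hp).trans (le_abs_self _)


lemma chi_eq_indicator {r σ : ℝ} {χ : ℝ × ℝ → ℝ} (hχ : χ ∈ XiSet r σ) :
    χ = (S r).indicator χ := by
  funext p
  by_cases hp : p ∈ S r
  · rw [Set.indicator_of_mem hp]
  · rw [Set.indicator_of_notMem hp, hχ.2.2 p (not_lt.mp hp)]

lemma integrable_of_Xi {r σ : ℝ} (hr : 0 < r) (hσ : 0 < σ) {χ : ℝ × ℝ → ℝ}
    (hχ : χ ∈ XiSet r σ) : Integrable χ muHalf := by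
  rw [chi_eq_indicator hχ, integrable_indicator_iff (hS_meas r)]
  haveI : IsFiniteMeasure (muHalf.restrict (S r)) := by
    constructor
    rw [Measure.restrict_apply_univ, muHalf, Measure.restrict_apply (hS_meas r)]
    refine lt_of_le_of_lt (measure_mono ?_) ((isCompact_Icc.prod isCompact_Icc).measure_lt_top
      (K := B r))
    rintro p ⟨hp1, hp2⟩
    exact mem_B_of hr hp2 hp1
  have h1 : (1:ℝ≥0∞) ≤ ENNReal.ofReal (1 + 1/σ) := by
    rw [show (1:ℝ≥0∞) = ENNReal.ofReal 1 by simp]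
    exact ENNReal.ofReal_le_ofReal (by have := one_div_pos.mpr hσ; linarith)
  exact memLp_one_iff_integrable.mp ((hχ.1.restrict (S r)).mono_exponent h1)

lemma integrable_pow_of_Xi {σ r : ℝ} (hσ : 0 < σ) {χ : ℝ × ℝ → ℝ}
    (hχ : χ ∈ XiSet r σ) : Integrable (fun p => χ p ^ (1 + 1/σ)) muHalf := by
  have hpe : (0:ℝ) < 1 + 1/σ := by positivity
  have h := hχ.1.integrable_norm_rpow (ENNReal.ofReal_pos.mpr hpe).ne'
    ENNReal.ofReal_ne_top
  refine h.congr (Filter.Eventually.of_forall fun p => ?_)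
  simp only [ENNReal.toReal_ofReal hpe.le, Real.norm_of_nonneg (hχ.2.1 p)]

lemma integrable_g_mul_of_Xi {r σ : ℝ} (hr : 0 < r) (hσ : 0 < σ) {χ : ℝ × ℝ → ℝ}
    (hχ : χ ∈ XiSet r σ) : Integrable (fun p => g r p * χ p) muHalf := by
  refine Integrable.mono' ((integrable_of_Xi hr hσ hχ).const_mul 2)
    ((g_cont r).aestronglyMeasurable.mul hχ.1.1)
    (Filter.Eventually.of_forall fun p => ?_)
  rw [Real.norm_of_nonneg (mul_nonneg (g_nonneg r p) (hχ.2.1 p))]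
  by_cases h0 : χ p = 0
  · simp [h0]
  · have hg2 : g r p < 2 := by
      by_contra hc
      exact h0 (hχ.2.2 p (not_lt.mp hc))
    exact mul_le_mul_of_nonneg_right hg2.le (hχ.2.1 p)


noncomputable def chiLam (r σ α lam : ℝ) : ℝ × ℝ → ℝ :=
  (S r).indicator fun p => max (α - lam * g r p) 0 ^ σ

noncomputable def FJ (r σ α lam : ℝ) : ℝ × ℝ → ℝ :=
  (S r).indicator fun p => g r p * max (α - lam * g r p) 0 ^ σ

noncomputable def J (r σ α lam : ℝ) : ℝ := ∫ p, FJ r σ α lam p ∂muHalf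

lemma cont_inner (r σ α : ℝ) (hσ : 0 ≤ σ) (lam : ℝ) :
    Continuous fun p => max (α - lam * g r p) 0 ^ σ :=
  Continuous.rpow_const ((continuous_const.sub (continuous_const.mul (g_cont r))).max
    continuous_const) (fun _ => Or.inr hσ)

lemma chiLam_nonneg (r σ α lam : ℝ) (p : ℝ × ℝ) : 0 ≤ chiLam r σ α lam p :=
  Set.indicator_nonneg (fun q _ => Real.rpow_nonneg (le_max_right _ _) _) p

lemma max_bound {r α lam : ℝ} {p : ℝ × ℝ} (hgp : g r p < 2) :
    max (α - lam * g r p) 0 ≤ |α| + 2 * |lam| := by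
  apply max_le
  · have h1 : -(lam * g r p) ≤ |lam| * g r p := by
      have := mul_le_mul_of_nonneg_right (neg_le_abs lam) (g_nonneg r p)
      nlinarith [this]
    have h2 : |lam| * g r p ≤ |lam| * 2 := mul_le_mul_of_nonneg_left hgp.le (abs_nonneg lam)
    have h3 : α ≤ |α| := le_abs_self α
    linarith
  · positivity

lemma chiLam_memXi {r σ α : ℝ} (hr : 0 < r) (hσ : 0 < σ) (lam : ℝ) :
    chiLam r σ α lam ∈ XiSet r σ := by
  refine ⟨?_, chiLam_nonneg r σ α lam, fun p hp => ?_⟩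
  · refine memLp_of_bound (r := r) _ _
      (((cont_inner r σ α hσ.le lam).aestronglyMeasurable).indicator (hS_meas r))
      ((|α| + 2 * |lam|) ^ σ) (fun p hp => ?_)
    by_cases hps : p ∈ S r
    · rw [chiLam, Set.indicator_of_mem hps,
        Real.norm_of_nonneg (Real.rpow_nonneg (le_max_right _ _) _),
        Set.indicator_of_mem (mem_B_of hr hp hps)]
      exact Real.rpow_le_rpow (le_max_right _ _) (max_bound hps) hσ.le
    · rw [chiLam, Set.indicator_of_notMem hps, norm_zero]
      exact Set.indicator_nonneg (fun q _ => by positivity) p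
  · exact Set.indicator_of_notMem (by simpa [S, g] using hp) _

lemma g_mul_chiLam (r σ α lam : ℝ) (p : ℝ × ℝ) :
    g r p * chiLam r σ α lam p = FJ r σ α lam p := by
  by_cases hps : p ∈ S r
  · rw [chiLam, FJ, Set.indicator_of_mem hps, Set.indicator_of_mem hps]
  · rw [chiLam, FJ, Set.indicator_of_notMem hps, Set.indicator_of_notMem hps, mul_zero]

lemma FJ_integrable {r σ α : ℝ} (hr : 0 < r) (hσ : 0 < σ) (lam : ℝ) :
    Integrable (FJ r σ α lam) muHalf := by
  have := integrable_g_mul_of_Xi hr hσ (chiLam_memXi (α := α) hr hσ lam)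
  exact this.congr (Filter.Eventually.of_forall fun p => g_mul_chiLam r σ α lam p)

lemma FJ_nonneg (r σ α lam : ℝ) (p : ℝ × ℝ) : 0 ≤ FJ r σ α lam p :=
  Set.indicator_nonneg (fun q _ => mul_nonneg (g_nonneg r q)
    (Real.rpow_nonneg (le_max_right _ _) _)) p

lemma FJ_mono {r σ α : ℝ} (hσ : 0 < σ) {lo lam : ℝ} (h : lo ≤ lam) (p : ℝ × ℝ) :
    FJ r σ α lam p ≤ FJ r σ α lo p := by
  by_cases hps : p ∈ S r
  · rw [FJ, FJ, Set.indicator_of_mem hps, Set.indicator_of_mem hps]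
    refine mul_le_mul_of_nonneg_left ?_ (g_nonneg r p)
    refine Real.rpow_le_rpow (le_max_right _ _) (max_le_max ?_ le_rfl) hσ.le
    have := mul_le_mul_of_nonneg_right h (g_nonneg r p)
    linarith
  · simp only [FJ, Set.indicator_of_notMem hps, le_refl]


lemma FJ_aesm (r σ α lam : ℝ) (hσ : 0 ≤ σ := by positivity) :
    AEStronglyMeasurable (FJ r σ α lam) muHalf := by
  unfold FJ
  exact (((g_cont r).mul (cont_inner r σ α hσ lam)).aestronglyMeasurable).indicator (hS_meas r)

lemma J_continuousOn {r σ α : ℝ} (hr : 0 < r) (hσ : 0 < σ) {lo : ℝ} (hlo : lo ≤ α) :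
    ContinuousOn (J r σ α) (Set.Icc lo α) := by
  set cl : ℝ → ℝ := fun lam => max lo (min lam α) with hcl
  have hclc : Continuous cl := continuous_const.max (continuous_id.min continuous_const)
  have hclmem : ∀ lam, lo ≤ cl lam := fun lam => le_max_left _ _
  have hK : Continuous fun lam => J r σ α (cl lam) := by
    refine continuous_of_dominated (F := fun lam p => FJ r σ α (cl lam) p)
      (bound := FJ r σ α lo) (fun lam => ?_) (fun lam => ?_) (FJ_integrable hr hσ lo) ?_
    · exact FJ_aesm r σ α (cl lam)
    · refine Filter.Eventually.of_forall fun p => ?_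
      rw [Real.norm_of_nonneg (FJ_nonneg r σ α _ p)]
      exact FJ_mono hσ (hclmem lam) p
    · refine Filter.Eventually.of_forall fun p => ?_
      by_cases hps : p ∈ S r
      · simp only [FJ, Set.indicator_of_mem hps]
        refine continuous_const.mul ?_
        refine Continuous.rpow_const ?_ (fun _ => Or.inr hσ.le)
        exact (continuous_const.sub ((hclc.comp continuous_id).mul continuous_const)).max
          continuous_const
      · simp only [FJ, Set.indicator_of_notMem hps]
        exact continuous_const
  refine (hK.continuousOn).congr fun lam hlam => ?_
  have : cl lam = lam := by
    rw [hcl]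
    simp only [min_eq_left hlam.2, max_eq_right hlam.1]
  simp only [this]

lemma J_at_alpha {r σ α : ℝ} (hr : 0 < r) (hσ : 0 < σ) (hα : 0 < α) :
    J r σ α α = 0 := by
  rw [J]
  refine integral_eq_zero_of_ae ?_
  filter_upwards [ae_snd_nonneg] with p hp
  by_cases hps : p ∈ S r
  · have hg1 := g_ge_one hr hp
    have : α - α * g r p ≤ 0 := by nlinarith
    simp only [FJ, Set.indicator_of_mem hps, max_eq_right this,
      Real.zero_rpow hσ.ne', mul_zero, Pi.zero_apply]
  · simp [FJ, Set.indicator_of_notMem hps]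

lemma J_lower {r σ α : ℝ} (hr : 0 < r) (hσ : 0 < σ) (hα : 0 < α) {m : ℝ} (hm : 0 < m) :
    m ≤ J r σ α (-((max (m / r ^ 2) 1) ^ (1/σ))) := by
  set A : ℝ := (max (m / r ^ 2) 1) ^ (1/σ) with hA
  have hmax1 : (1:ℝ) ≤ max (m / r ^ 2) 1 := le_max_right _ _
  have hApos : 0 < A := Real.rpow_pos_of_pos (by linarith) _
  have hAσ : A ^ σ = max (m / r ^ 2) 1 := by
    rw [hA, ← Real.rpow_mul (by linarith), one_div, inv_mul_cancel₀ hσ.ne', Real.rpow_one]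
  set T : Set (ℝ × ℝ) := Set.Icc (0:ℝ) 1 ×ˢ Set.Icc (0:ℝ) (r ^ 2) with hT
  have hTmeas : MeasurableSet T := measurableSet_Icc.prod measurableSet_Icc
  have hr2 : (0:ℝ) < r ^ 2 := by positivity
  have hTsub : ∀ p ∈ T, 0 ≤ p.2 ∧ p ∈ S r := by
    rintro p ⟨⟨h1, h2⟩, h3, h4⟩
    refine ⟨h3, ?_⟩
    have hdiv : p.2 / r ^ 2 ≤ 1 := (div_le_one hr2).mpr h4
    have : 1 + p.1 ^ 2 + p.2 / r ^ 2 < 4 := by nlinarith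
    exact (Real.sqrt_lt' (by norm_num)).mpr (by nlinarith)
  have hmuT : muHalf T = ENNReal.ofReal (r ^ 2) := by
    rw [muHalf, Measure.restrict_apply hTmeas]
    have hTT : T ∩ {p : ℝ × ℝ | 0 ≤ p.2} = T := Set.inter_eq_left.mpr (fun p hp => (hTsub p hp).1)
    rw [hTT, hT, Measure.volume_eq_prod, Measure.prod_prod, Real.volume_Icc, Real.volume_Icc]
    rw [← ENNReal.ofReal_mul (by norm_num)]
    norm_num
  have hbound : ∀ p ∈ T, A ^ σ ≤ FJ r σ α (-A) p := by
    intro p hp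
    obtain ⟨hp2, hps⟩ := hTsub p hp
    have hg1 := g_ge_one hr hp2
    have hge : A ≤ α - (-A) * g r p := by nlinarith
    have hmaxge : A ≤ max (α - (-A) * g r p) 0 := le_trans hge (le_max_left _ _)
    have hpow := Real.rpow_le_rpow hApos.le hmaxge hσ.le
    rw [FJ, Set.indicator_of_mem hps]
    calc A ^ σ = 1 * A ^ σ := (one_mul _).symm
      _ ≤ g r p * max (α - (-A) * g r p) 0 ^ σ :=
        mul_le_mul hg1 hpow (Real.rpow_nonneg hApos.le _) (g_nonneg r p)
  have hint := FJ_integrable (α := α) hr hσ (-A)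
  have step1 : A ^ σ * (muHalf T).toReal ≤ ∫ p in T, FJ r σ α (-A) p ∂muHalf :=
    setIntegral_ge_of_const_le_real hTmeas (by rw [hmuT]; exact ENNReal.ofReal_ne_top)
      hbound hint.integrableOn
  have step2 : ∫ p in T, FJ r σ α (-A) p ∂muHalf ≤ J r σ α (-A) :=
    setIntegral_le_integral hint (Filter.Eventually.of_forall (FJ_nonneg r σ α (-A)))
  have htor : (muHalf T).toReal = r ^ 2 := by rw [hmuT, ENNReal.toReal_ofReal hr2.le]
  have hfin : m ≤ A ^ σ * r ^ 2 := by
    rw [hAσ]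
    calc m = m / r ^ 2 * r ^ 2 := by field_simp
      _ ≤ max (m / r ^ 2) 1 * r ^ 2 :=
        mul_le_mul_of_nonneg_right (le_max_left _ _) hr2.le
  rw [htor] at step1
  linarith


lemma phi_min' {σ : ℝ} (hσ : 0 < σ) (α lam G : ℝ) {t : ℝ} (ht : 0 ≤ t) :
    σ/(σ+1) * (max (α - lam*G) 0 ^ σ) ^ (1+1/σ) - α * (max (α - lam*G) 0 ^ σ)
      + lam * (G * (max (α - lam*G) 0 ^ σ))
    ≤ σ/(σ+1) * t ^ (1+1/σ) - α * t + lam * (G * t) := by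
  have h := phi_min hσ (α - lam * G) ht
  have e1 : σ/(σ+1) * t ^ (1+1/σ) - (α - lam*G) * t
      = σ/(σ+1) * t ^ (1+1/σ) - α * t + lam * (G * t) := by ring
  have e2 : σ/(σ+1) * (max (α - lam*G) 0 ^ σ) ^ (1+1/σ) - (α - lam*G) * (max (α - lam*G) 0 ^ σ)
      = σ/(σ+1) * (max (α - lam*G) 0 ^ σ) ^ (1+1/σ) - α * (max (α - lam*G) 0 ^ σ)
        + lam * (G * (max (α - lam*G) 0 ^ σ)) := by ring
  linarith

lemma phi_eq' {σ : ℝ} (hσ : 0 < σ) (α lam G : ℝ) {t : ℝ} (ht : 0 ≤ t)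
    (h : σ/(σ+1) * t ^ (1+1/σ) - α * t + lam * (G * t)
      = σ/(σ+1) * (max (α - lam*G) 0 ^ σ) ^ (1+1/σ) - α * (max (α - lam*G) 0 ^ σ)
        + lam * (G * (max (α - lam*G) 0 ^ σ))) :
    t = max (α - lam*G) 0 ^ σ := by
  refine phi_eq hσ (α - lam * G) ht ?_
  have e1 : σ/(σ+1) * t ^ (1+1/σ) - (α - lam*G) * t
      = σ/(σ+1) * t ^ (1+1/σ) - α * t + lam * (G * t) := by ring
  have e2 : σ/(σ+1) * (max (α - lam*G) 0 ^ σ) ^ (1+1/σ) - (α - lam*G) * (max (α - lam*G) 0 ^ σ)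
      = σ/(σ+1) * (max (α - lam*G) 0 ^ σ) ^ (1+1/σ) - α * (max (α - lam*G) 0 ^ σ)
        + lam * (G * (max (α - lam*G) 0 ^ σ)) := by ring
  linarith

noncomputable def Phi (r σ α lam : ℝ) (χ : ℝ × ℝ → ℝ) (p : ℝ × ℝ) : ℝ :=
  σ/(σ+1) * χ p ^ (1+1/σ) - α * χ p + lam * (g r p * χ p)

lemma Phi_integrable {r σ α : ℝ} (hr : 0 < r) (hσ : 0 < σ) (lam : ℝ) {χ : ℝ × ℝ → ℝ}
    (hχ : χ ∈ XiSet r σ) : Integrable (Phi r σ α lam χ) muHalf := by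
  unfold Phi
  exact (((integrable_pow_of_Xi hσ hχ).const_mul (σ/(σ+1))).sub
    ((integrable_of_Xi hr hσ hχ).const_mul α)).add
    ((integrable_g_mul_of_Xi hr hσ hχ).const_mul lam)

lemma H_decomp {r σ α a : ℝ} (hr : 0 < r) (hσ : 0 < σ) (lam : ℝ) {χ : ℝ × ℝ → ℝ}
    (hχ : χ ∈ XiSet r σ) (hF : Ffun r a χ = 0) :
    Hfun σ α χ = (∫ p, Phi r σ α lam χ p ∂muHalf) - lam * (r ^ 2 / Real.pi * a) := by
  have hgχ : ∫ p, g r p * χ p ∂muHalf = r ^ 2 / Real.pi * a := by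
    rw [Ffun] at hF
    have : (∫ p, Real.sqrt (1 + p.1 ^ 2 + p.2 / r ^ 2) * χ p ∂muHalf)
        = ∫ p, g r p * χ p ∂muHalf := rfl
    linarith [hF, this.symm.le, this.le]
  have hint1 : Integrable (fun p => σ/(σ+1) * χ p ^ (1+1/σ) - α * χ p) muHalf :=
    ((integrable_pow_of_Xi hσ hχ).const_mul (σ/(σ+1))).sub
      ((integrable_of_Xi hr hσ hχ).const_mul α)
  have hint2 : Integrable (fun p => lam * (g r p * χ p)) muHalf :=
    (integrable_g_mul_of_Xi hr hσ hχ).const_mul lam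
  have hsplit : ∫ p, Phi r σ α lam χ p ∂muHalf
      = (∫ p, (σ/(σ+1) * χ p ^ (1+1/σ) - α * χ p) ∂muHalf)
        + ∫ p, lam * (g r p * χ p) ∂muHalf := integral_add hint1 hint2
  rw [hsplit, integral_const_mul, hgχ, Hfun]
  ring

lemma Phi_le {r σ α : ℝ} (hσ : 0 < σ) (lam : ℝ) {χ : ℝ × ℝ → ℝ}
    (hχ : χ ∈ XiSet r σ) (p : ℝ × ℝ) :
    Phi r σ α lam (chiLam r σ α lam) p ≤ Phi r σ α lam χ p := by
  by_cases hps : p ∈ S r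
  · have h := phi_min' hσ α lam (g r p) (hχ.2.1 p)
    unfold Phi chiLam
    rw [Set.indicator_of_mem hps]
    exact h
  · have h1 : χ p = 0 := hχ.2.2 p (not_lt.mp (by simpa [S, g] using hps))
    unfold Phi chiLam
    rw [Set.indicator_of_notMem hps, h1]

lemma Phi_eq_imp {r σ α : ℝ} (hσ : 0 < σ) (lam : ℝ) {χ : ℝ × ℝ → ℝ}
    (hχ : χ ∈ XiSet r σ) (p : ℝ × ℝ)
    (h : Phi r σ α lam χ p = Phi r σ α lam (chiLam r σ α lam) p) :
    χ p = chiLam r σ α lam p := by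
  by_cases hps : p ∈ S r
  · unfold Phi chiLam at h
    show χ p = (S r).indicator _ p
    rw [Set.indicator_of_mem hps] at h ⊢
    exact phi_eq' hσ α lam (g r p) (hχ.2.1 p) h
  · show χ p = (S r).indicator _ p
    rw [Set.indicator_of_notMem hps]
    exact hχ.2.2 p (not_lt.mp (by simpa [S, g] using hps))

end Stmt16


open Stmt16

/-- The infimum of `H` over `{χ ∈ Ξ_r : F(χ) = 0}` is attained, and the minimizer
is unique (as an element of `L^{1+1/σ}`, i.e. up to a.e. equality). -/
theorem stmt_16 (r σ α a : ℝ) (hr : 0 < r) (hσ : σ ∈ Set.Ioo (0:ℝ) (3/2))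
    (hα : 0 < α) (ha : 0 < a) :
    ∃ χs ∈ XiSet r σ, Ffun r a χs = 0 ∧
      (∀ χ ∈ XiSet r σ, Ffun r a χ = 0 → Hfun σ α χs ≤ Hfun σ α χ) ∧
      (∀ χ ∈ XiSet r σ, Ffun r a χ = 0 →
        (∀ χ' ∈ XiSet r σ, Ffun r a χ' = 0 → Hfun σ α χ ≤ Hfun σ α χ') →
        χ =ᵐ[muHalf] χs) := by
  obtain ⟨hσ0, -⟩ := hσ
  set m : ℝ := r ^ 2 / Real.pi * a with hmdef
  have hm : 0 < m := mul_pos (div_pos (by positivity) Real.pi_pos) ha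
  set lo : ℝ := -((max (m / r ^ 2) 1) ^ (1/σ)) with hlodef
  have hApos : 0 < (max (m / r ^ 2) 1) ^ (1/σ) :=
    Real.rpow_pos_of_pos (lt_of_lt_of_le zero_lt_one (le_max_right _ _)) _
  have hlo_le : lo ≤ α := by rw [hlodef]; linarith
  have hivt := intermediate_value_Icc' hlo_le (J_continuousOn hr hσ0 hlo_le)
  have hmem : m ∈ Set.Icc (J r σ α α) (J r σ α lo) := by
    constructor
    · rw [J_at_alpha hr hσ0 hα]; exact hm.le
    · exact J_lower hr hσ0 hα hm
  obtain ⟨lam, hlamIcc, hJlam⟩ := hivt hmem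
  set χs : ℝ × ℝ → ℝ := chiLam r σ α lam with hχsdef
  have hχsXi : χs ∈ XiSet r σ := chiLam_memXi hr hσ0 lam
  have hFs : Ffun r a χs = 0 := by
    rw [Ffun]
    have h1 : (∫ p, Real.sqrt (1 + p.1 ^ 2 + p.2 / r ^ 2) * χs p ∂muHalf)
        = J r σ α lam := by
      rw [J]
      exact integral_congr_ae (Filter.Eventually.of_forall fun p => g_mul_chiLam r σ α lam p)
    rw [h1, hJlam]
    simp [hmdef]
  have hminProp : ∀ χ ∈ XiSet r σ, Ffun r a χ = 0 → Hfun σ α χs ≤ Hfun σ α χ := by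
    intro χ hχ hF
    rw [H_decomp hr hσ0 lam hχ hF, H_decomp hr hσ0 lam hχsXi hFs]
    refine sub_le_sub_right ?_ _
    exact integral_mono (Phi_integrable hr hσ0 lam hχsXi) (Phi_integrable hr hσ0 lam hχ)
      (fun p => Phi_le hσ0 lam hχ p)
  refine ⟨χs, hχsXi, hFs, hminProp, ?_⟩
  intro χ hχ hF hmin
  have h1 : Hfun σ α χs ≤ Hfun σ α χ := hminProp χ hχ hF
  have h2 : Hfun σ α χ ≤ Hfun σ α χs := hmin χs hχsXi hFs
  have heq : Hfun σ α χ = Hfun σ α χs := le_antisymm h2 h1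
  have hIeq : ∫ p, Phi r σ α lam χ p ∂muHalf = ∫ p, Phi r σ α lam χs p ∂muHalf := by
    have e1 := H_decomp (α := α) (a := a) hr hσ0 lam hχ hF
    have e2 := H_decomp (α := α) (a := a) hr hσ0 lam hχsXi hFs
    rw [e1, e2] at heq
    linarith
  have hd0 : (0 : (ℝ × ℝ) → ℝ) ≤ fun p => Phi r σ α lam χ p - Phi r σ α lam χs p :=
    fun p => sub_nonneg.mpr (Phi_le hσ0 lam hχ p)
  have hdint : Integrable (Phi r σ α lam χ - Phi r σ α lam χs) muHalf :=
    (Phi_integrable hr hσ0 lam hχ).sub (Phi_integrable hr hσ0 lam hχsXi)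
  have hzero : ∫ p, (Phi r σ α lam χ - Phi r σ α lam χs) p ∂muHalf = 0 := by
    have := integral_sub (Phi_integrable (α := α) hr hσ0 lam hχ) (Phi_integrable (α := α) hr hσ0 lam hχsXi)
    simp only [Pi.sub_apply] at this ⊢
    rw [this, hIeq, sub_self]
  have hae := (integral_eq_zero_iff_of_nonneg hd0 hdint).mp hzero
  filter_upwards [hae] with p hp
  have hpe : Phi r σ α lam χ p = Phi r σ α lam χs p := by
    have : Phi r σ α lam χ p - Phi r σ α lam χs p = 0 := hp
    linarith
  exact Phi_eq_imp hσ0 lam hχ p hpe
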